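/- arXiv:2004.13501 — 4 statements merged into one kernel-verified Lean document; each statement's English description precedes it below -/
import Mathlib

section
/- Let X_1, X_2, … be i.i.d. real-valued random variables on a probability space (Ω, 𝓕, P) such that for P-almost every ω one has lim_{c→∞} sup_{n∈ℕ} n^{-1} ∑_{i=1}^{n} |X_i(ω)| · 1_{[c,∞)}(|X_i(ω)|) = 0. Then X_1 is integrable (X_1 ∈ L^1(P)) and n^{-1} ∑_{i=1}^{n} X_i converges P-almost surely to E[X_1]. -/
open MeasureTheory ProbabilityTheory Filter Finset

/-- **A strong law of large numbers of Kolmogorov's type.**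
If `X 0, X 1, …` are i.i.d. real random variables such that, almost surely,
`lim_{c → ∞} sup_{n} n⁻¹ ∑_{i < n} |X i| · 1_{[c,∞)}(|X i|) = 0`,
then `X 0` is integrable and the sample means converge almost surely to `𝔼[X 0]`. -/
theorem strong_law_of_uniform_integrability
    {Ω : Type*} [MeasurableSpace Ω] (P : Measure Ω) [IsProbabilityMeasure P]
    (X : ℕ → Ω → ℝ) (hmeas : ∀ i, Measurable (X i))
    (hindep : iIndepFun X P)
    (hident : ∀ i, IdentDistrib (X i) (X 0) P P)
    (hUI : ∀ᵐ ω ∂P, Tendsto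
      (fun c : ℝ => ⨆ n : ℕ, ENNReal.ofReal
        ((n : ℝ)⁻¹ * ∑ i ∈ range n,
          |X i ω| * Set.indicator (Set.Ici c) 1 |X i ω|))
      atTop (nhds 0)) :
    Integrable (X 0) P ∧
      ∀ᵐ ω ∂P, Tendsto (fun n : ℕ => (n : ℝ)⁻¹ * ∑ i ∈ range n, X i ω)
        atTop (nhds (∫ ω, X 0 ω ∂P)) := by
  -- truncated variables
  set Y : ℕ → ℕ → Ω → ℝ := fun M i ω => min |X i ω| M with hY
  have hYmeas : ∀ M i, Measurable (Y M i) := fun M i =>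
    ((hmeas i).abs.min measurable_const)
  have hYint : ∀ M i, Integrable (Y M i) P := by
    intro M i
    refine Integrable.mono' (integrable_const (M : ℝ)) (hYmeas M i).aestronglyMeasurable ?_
    filter_upwards with ω
    rw [Real.norm_eq_abs, abs_of_nonneg (le_min (abs_nonneg _) (Nat.cast_nonneg M))]
    exact min_le_right _ _
  have hYindep : ∀ M : ℕ, Pairwise (Function.onFun (IndepFun · · P) (Y M)) := by
    intro M
    have := hindep.comp (g := fun _ x => min |x| (M : ℝ))
      (fun i => measurable_abs.min measurable_const)
    exact fun i j hij => this.indepFun hij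
  have hYident : ∀ M i, IdentDistrib (Y M i) (Y M 0) P P := fun M i =>
    (hident i).comp (measurable_abs.min measurable_const)
  have hSLLN : ∀ᵐ ω ∂P, ∀ M : ℕ, Tendsto (fun n : ℕ => (∑ i ∈ range n, Y M i ω) / n)
      atTop (nhds (∫ ω, Y M 0 ω ∂P)) := by
    rw [ae_all_iff]
    intro M
    exact strong_law_ae_real (Y M) (hYint M 0) (hYindep M) (hYident M)
  -- pick a good ω to bound the truncated expectations
  obtain ⟨ω₀, hω₀UI, hω₀S⟩ : ∃ ω, Tendsto
      (fun c : ℝ => ⨆ n : ℕ, ENNReal.ofReal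
        ((n : ℝ)⁻¹ * ∑ i ∈ range n,
          |X i ω| * Set.indicator (Set.Ici c) 1 |X i ω|)) atTop (nhds 0) ∧
      ∀ M : ℕ, Tendsto (fun n : ℕ => (∑ i ∈ range n, Y M i ω) / n)
        atTop (nhds (∫ ω, Y M 0 ω ∂P)) := by
    have := hUI.and hSLLN
    rcases this.exists with ⟨ω, h1, h2⟩
    exact ⟨ω, h1, h2⟩
  obtain ⟨c, hc0, hc1⟩ : ∃ c : ℝ, 0 ≤ c ∧ (⨆ n : ℕ, ENNReal.ofReal
      ((n : ℝ)⁻¹ * ∑ i ∈ range n,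
        |X i ω₀| * Set.indicator (Set.Ici c) 1 |X i ω₀|)) < 1 := by
    have h1 := hω₀UI.eventually_lt_const (zero_lt_one : (0:ENNReal) < 1)
    have h2 : ∀ᶠ c : ℝ in atTop, 0 ≤ c := eventually_ge_atTop 0
    exact (h2.and h1).exists
  -- the truncated averages at ω₀ are bounded by c + 1
  have key : ∀ M : ℕ, ∫ ω, Y M 0 ω ∂P ≤ c + 1 := by
    intro M
    refine le_of_tendsto (hω₀S M) ?_
    filter_upwards [eventually_ge_atTop 1] with n hn
    have htail : (n : ℝ)⁻¹ * ∑ i ∈ range n,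
        |X i ω₀| * Set.indicator (Set.Ici c) 1 |X i ω₀| ≤ 1 := by
      have := le_of_lt (lt_of_le_of_lt (le_iSup _ n) hc1)
      rwa [ENNReal.ofReal_le_one] at this
    have hptwise : ∀ i, Y M i ω₀ ≤ c + |X i ω₀| * Set.indicator (Set.Ici c) 1 |X i ω₀| := by
      intro i
      by_cases h : c ≤ |X i ω₀|
      · simp only [Set.indicator_apply, Set.mem_Ici, h, if_true, Pi.one_apply, mul_one]
        calc Y M i ω₀ ≤ |X i ω₀| := min_le_left _ _
        _ ≤ c + |X i ω₀| := by linarith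
      · simp only [Set.indicator_apply, Set.mem_Ici, h, if_false, mul_zero, add_zero]
        exact le_trans (min_le_left _ _) (le_of_not_ge h)
    have hn' : (0:ℝ) < n := by exact_mod_cast hn
    rw [div_le_iff₀ hn']
    calc ∑ i ∈ range n, Y M i ω₀
        ≤ ∑ i ∈ range n, (c + |X i ω₀| * Set.indicator (Set.Ici c) 1 |X i ω₀|) :=
          sum_le_sum fun i _ => hptwise i
      _ = n * c + ∑ i ∈ range n, |X i ω₀| * Set.indicator (Set.Ici c) 1 |X i ω₀| := by
          rw [sum_add_distrib, sum_const, card_range, nsmul_eq_mul]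
      _ ≤ n * c + n * 1 := by
          have : ∑ i ∈ range n, |X i ω₀| * Set.indicator (Set.Ici c) 1 |X i ω₀| ≤ n * 1 := by
            rw [mul_one]
            have := (inv_mul_le_iff₀ hn').mp (le_trans htail (le_refl 1))
            linarith [this]
          linarith
      _ = (c + 1) * n := by ring
  -- integrability
  have hint : Integrable (X 0) P := by
    refine ⟨(hmeas 0).aestronglyMeasurable, ?_⟩
    rw [hasFiniteIntegral_iff_norm]
    have hmono : Monotone fun M : ℕ => fun ω => ENNReal.ofReal (Y M 0 ω) := by
      intro M N hMN ω
      exact ENNReal.ofReal_le_ofReal (min_le_min le_rfl (by exact_mod_cast hMN))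
    have hsup : ∀ ω, (⨆ M : ℕ, ENNReal.ofReal (Y M 0 ω)) = ENNReal.ofReal ‖X 0 ω‖ := by
      intro ω
      apply le_antisymm
      · exact iSup_le fun M => ENNReal.ofReal_le_ofReal
          (by rw [Real.norm_eq_abs]; exact min_le_left _ _)
      · refine le_trans ?_ (le_iSup _ ⌈|X 0 ω|⌉₊)
        apply ENNReal.ofReal_le_ofReal
        rw [Real.norm_eq_abs]
        exact le_min le_rfl (Nat.le_ceil _)
    calc ∫⁻ ω, ENNReal.ofReal ‖X 0 ω‖ ∂P
        = ∫⁻ ω, ⨆ M : ℕ, ENNReal.ofReal (Y M 0 ω) ∂P := by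
          simp_rw [hsup]
      _ = ⨆ M : ℕ, ∫⁻ ω, ENNReal.ofReal (Y M 0 ω) ∂P :=
          lintegral_iSup (fun M => (hYmeas M 0).ennreal_ofReal) hmono
      _ ≤ ⨆ M : ℕ, ENNReal.ofReal (c + 1) := by
          refine iSup_mono fun M => ?_
          rw [← ofReal_integral_eq_lintegral_ofReal (hYint M 0)
            (Filter.Eventually.of_forall fun ω => le_min (abs_nonneg _) (Nat.cast_nonneg M))]
          exact ENNReal.ofReal_le_ofReal (key M)
      _ < ⊤ := by simp [ENNReal.ofReal_lt_top]
  refine ⟨hint, ?_⟩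
  have := strong_law_ae_real X hint
    (fun i j hij => hindep.indepFun hij) hident
  filter_upwards [this] with ω hω
  convert hω using 2 with n
  rw [div_eq_inv_mul]
end

section
/- Let X_1, X_2, … be i.i.d. real-valued random variables on a probability space (Ω, 𝓕, P) such that for P-almost every ω one has lim_{c→∞} sup_{n∈ℕ} n^{-1} ∑_{i=1}^{n} |X_i(ω)| · 1_{[c,∞)}(|X_i(ω)|) = 0. Then X_1 is integrable, i.e. E[|X_1|] < ∞. -/
open MeasureTheory ProbabilityTheory Filter Finset Topology

/-- If `X 0, X 1, …` are i.i.d. real random variables such that, almost surely,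
`lim_{c → ∞} sup_{n} n⁻¹ ∑_{i < n} |X i| · 1_{[c,∞)}(|X i|) = 0`,
then `X 0` is integrable. -/
theorem integrable_of_uniform_integrability_of_iid
    {Ω : Type*} [MeasurableSpace Ω] (P : Measure Ω) [IsProbabilityMeasure P]
    (X : ℕ → Ω → ℝ) (hmeas : ∀ i, Measurable (X i))
    (hindep : iIndepFun X P)
    (hident : ∀ i, IdentDistrib (X i) (X 0) P P)
    (hUI : ∀ᵐ ω ∂P, Tendsto
      (fun c : ℝ => ⨆ n : ℕ, ENNReal.ofReal
        ((n : ℝ)⁻¹ * ∑ i ∈ range n,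
          |X i ω| * Set.indicator (Set.Ici c) 1 |X i ω|))
      atTop (nhds 0)) :
    Integrable (X 0) P := by
  by_contra hint
  -- truncated variables
  set Y : ℕ → ℕ → Ω → ℝ := fun m i ω => min |X i ω| m with hY
  have hφ : ∀ m : ℕ, Measurable (fun x : ℝ => min |x| m) := fun m =>
    (measurable_abs).min measurable_const
  have hYmeas : ∀ m i, Measurable (Y m i) := fun m i => (hφ m).comp (hmeas i)
  have hYnonneg : ∀ m i ω, 0 ≤ Y m i ω := fun m i ω =>
    le_min (abs_nonneg _) (by positivity)
  have hYle : ∀ m i ω, Y m i ω ≤ m := fun m i ω => min_le_right _ _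
  have hYint : ∀ m, Integrable (Y m 0) P := by
    intro m
    refine ⟨(hYmeas m 0).aestronglyMeasurable, ?_⟩
    apply HasFiniteIntegral.of_bounded (C := (m : ℝ))
    filter_upwards with ω
    rw [Real.norm_eq_abs, abs_of_nonneg (hYnonneg m 0 ω)]
    exact hYle m 0 ω
  -- strong law for each truncation
  have hSLLN : ∀ m, ∀ᵐ ω ∂P, Tendsto
      (fun n : ℕ => (∑ i ∈ range n, Y m i ω) / n) atTop (𝓝 (P[Y m 0])) := by
    intro m
    refine strong_law_ae_real _ (hYint m) ?_ ?_
    · intro i j hij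
      exact (hindep.indepFun hij).comp (hφ m) (hφ m)
    · intro i
      exact (hident i).comp (hφ m)
  -- integrals of truncations tend to infinity
  have hdiv : ∀ K : ℝ, ∃ m : ℕ, K < P[Y m 0] := by
    intro K
    by_contra hcon
    push_neg at hcon
    apply hint
    refine ⟨(hmeas 0).aestronglyMeasurable, ?_⟩
    rw [hasFiniteIntegral_iff_norm]
    have key : ∀ m : ℕ, ∫⁻ ω, ENNReal.ofReal (Y m 0 ω) ∂P ≤ ENNReal.ofReal K := by
      intro m
      have := hcon m
      rw [← ofReal_integral_eq_lintegral_ofReal (hYint m)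
        (Filter.Eventually.of_forall (hYnonneg m 0))]
      exact ENNReal.ofReal_le_ofReal (hcon m)
    have hmono : Monotone (fun m : ℕ => fun ω => ENNReal.ofReal (Y m 0 ω)) := by
      intro a b hab
      intro ω
      exact ENNReal.ofReal_le_ofReal (min_le_min le_rfl (by exact_mod_cast hab))
    have hsup : (⨆ m : ℕ, fun ω => ENNReal.ofReal (Y m 0 ω)) =
        fun ω => ENNReal.ofReal ‖X 0 ω‖ := by
      funext ω
      rw [iSup_apply]
      rw [Real.norm_eq_abs]
      apply le_antisymm
      · exact iSup_le fun m => ENNReal.ofReal_le_ofReal (min_le_left _ _)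
      · obtain ⟨m, hm⟩ := exists_nat_ge (|X 0 ω|)
        refine le_trans (le_of_eq ?_) (le_iSup _ m)
        rw [hY]
        simp only
        rw [min_eq_left hm]
    calc ∫⁻ ω, ENNReal.ofReal ‖X 0 ω‖ ∂P
        = ∫⁻ ω, (⨆ m : ℕ, fun ω => ENNReal.ofReal (Y m 0 ω)) ω ∂P := by rw [hsup]
      _ = ∫⁻ ω, ⨆ m : ℕ, ENNReal.ofReal (Y m 0 ω) ∂P := by
          simp only [iSup_apply]
      _ = ⨆ m : ℕ, ∫⁻ ω, ENNReal.ofReal (Y m 0 ω) ∂P :=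
          lintegral_iSup (fun m => (hYmeas m 0).ennreal_ofReal)
            (fun a b hab ω => ENNReal.ofReal_le_ofReal
              (min_le_min le_rfl (by exact_mod_cast hab)))
      _ ≤ ENNReal.ofReal K := iSup_le key
      _ < ⊤ := ENNReal.ofReal_lt_top
  -- pick a point where everything holds
  have hae : ∀ᵐ ω ∂P, (Tendsto
      (fun c : ℝ => ⨆ n : ℕ, ENNReal.ofReal
        ((n : ℝ)⁻¹ * ∑ i ∈ range n,
          |X i ω| * Set.indicator (Set.Ici c) 1 |X i ω|))
      atTop (nhds 0)) ∧ ∀ m, Tendsto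
      (fun n : ℕ => (∑ i ∈ range n, Y m i ω) / n) atTop (𝓝 (P[Y m 0])) := by
    filter_upwards [hUI, ae_all_iff.2 hSLLN] with ω h1 h2
    exact ⟨h1, h2⟩
  obtain ⟨ω, hω1, hω2⟩ := hae.exists
  -- obtain c ≥ 0 with the sup < 1
  have h1 : (0 : ENNReal) < 1 := zero_lt_one
  obtain ⟨c, hc0, hc⟩ : ∃ c : ℝ, 0 ≤ c ∧ (⨆ n : ℕ, ENNReal.ofReal
      ((n : ℝ)⁻¹ * ∑ i ∈ range n,
        |X i ω| * Set.indicator (Set.Ici c) 1 |X i ω|)) < 1 := by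
    have := (hω1.eventually_lt_const h1).and (eventually_ge_atTop (0 : ℝ))
    obtain ⟨c, hc1, hc2⟩ := this.exists
    exact ⟨c, hc2, hc1⟩
  -- bound: for all m n, (∑ Y)/n ≤ c + 1
  have hbound : ∀ m n : ℕ, (∑ i ∈ range n, Y m i ω) / n ≤ c + 1 := by
    intro m n
    rcases Nat.eq_zero_or_pos n with hn | hn
    · simp [hn]; positivity
    have hsupn : ENNReal.ofReal ((n : ℝ)⁻¹ * ∑ i ∈ range n,
        |X i ω| * Set.indicator (Set.Ici c) 1 |X i ω|) < 1 :=
      lt_of_le_of_lt (le_iSup (fun n : ℕ => ENNReal.ofReal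
        ((n : ℝ)⁻¹ * ∑ i ∈ range n,
          |X i ω| * Set.indicator (Set.Ici c) 1 |X i ω|)) n) hc
    have hreal : (n : ℝ)⁻¹ * ∑ i ∈ range n,
        |X i ω| * Set.indicator (Set.Ici c) 1 |X i ω| ≤ 1 := by
      by_contra hgt
      push_neg at hgt
      have : (1 : ENNReal) ≤ ENNReal.ofReal ((n : ℝ)⁻¹ * ∑ i ∈ range n,
          |X i ω| * Set.indicator (Set.Ici c) 1 |X i ω|) := by
        rw [← ENNReal.ofReal_one]
        exact ENNReal.ofReal_le_ofReal hgt.le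
      exact absurd hsupn (not_lt.2 this)
    have hterm : ∀ i, Y m i ω ≤ c + |X i ω| * Set.indicator (Set.Ici c) 1 |X i ω| := by
      intro i
      rcases le_or_gt c (|X i ω|) with h | h
      · rw [Set.indicator_of_mem (Set.mem_Ici.2 h)]
        simp only [Pi.one_apply, mul_one]
        calc Y m i ω ≤ |X i ω| := min_le_left _ _
          _ ≤ c + |X i ω| := le_add_of_nonneg_left hc0
      · rw [Set.indicator_of_notMem (by simpa using h)]
        simp only [mul_zero, add_zero]
        exact le_trans (min_le_left _ _) h.le
    have hsum : (∑ i ∈ range n, Y m i ω) ≤ n * c + ∑ i ∈ range n,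
        |X i ω| * Set.indicator (Set.Ici c) 1 |X i ω| := by
      calc (∑ i ∈ range n, Y m i ω)
          ≤ ∑ i ∈ range n, (c + |X i ω| * Set.indicator (Set.Ici c) 1 |X i ω|) :=
            Finset.sum_le_sum fun i _ => hterm i
        _ = n * c + ∑ i ∈ range n, |X i ω| * Set.indicator (Set.Ici c) 1 |X i ω| := by
            rw [Finset.sum_add_distrib, Finset.sum_const, card_range, nsmul_eq_mul]
    have hnpos : (0 : ℝ) < n := by exact_mod_cast hn
    rw [div_le_iff₀ hnpos]
    calc (∑ i ∈ range n, Y m i ω) ≤ n * c + ∑ i ∈ range n,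
          |X i ω| * Set.indicator (Set.Ici c) 1 |X i ω| := hsum
      _ ≤ n * c + n * 1 := by
          have hS : (∑ i ∈ range n, |X i ω| * Set.indicator (Set.Ici c) 1 |X i ω|)
              ≤ (n : ℝ) := by
            have h2 := mul_le_mul_of_nonneg_left hreal hnpos.le
            rwa [← mul_assoc, mul_inv_cancel₀ hnpos.ne', one_mul, mul_one] at h2
          rw [mul_one]
          linarith
      _ = (c + 1) * n := by ring
  -- so the limits are ≤ c + 1
  have hlim : ∀ m, P[Y m 0] ≤ c + 1 := fun m =>
    le_of_tendsto (hω2 m) (Filter.Eventually.of_forall (hbound m))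
  obtain ⟨m, hm⟩ := hdiv (c + 1)
  exact absurd (hlim m) (not_le.2 hm)
end

section
/- Let X_1, X_2, … be i.i.d. real-valued random variables on a probability space (Ω, 𝓕, P), and for each n ∈ ℕ and ω ∈ Ω let P̂_n(·; ω) := n^{-1} ∑_{i=1}^{n} δ_{X_i(ω)} be the empirical distribution, a Borel probability measure on ℝ. Then for P-almost every ω ∈ Ω, the sequence of measures P̂_n(·; ω) converges weakly (in the topology of weak convergence of probability measures on ℝ) to the law ℙ of X_1. -/
open MeasureTheory ProbabilityTheory Filter Finset BoundedContinuousFunction ENNReal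
open Topology NNReal

private lemma emp_apply (x : ℕ → ℝ) {n : ℕ} (hn : n ≠ 0) {U : Set ℝ}
    (hU : MeasurableSet U) :
    ((n : ℝ≥0∞)⁻¹ • ∑ i ∈ range n, MeasureTheory.Measure.dirac (x i)) U
      = ENNReal.ofReal ((n : ℝ)⁻¹ * ∑ i ∈ range n, U.indicator (1 : ℝ → ℝ) (x i)) := by
  rw [Measure.smul_apply, Measure.finset_sum_apply, smul_eq_mul]
  have h1 : ∀ i ∈ range n, MeasureTheory.Measure.dirac (x i) U
      = ENNReal.ofReal (U.indicator (1 : ℝ → ℝ) (x i)) := by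
    intro i _
    rw [Measure.dirac_apply' _ hU]
    by_cases h : x i ∈ U <;> simp [h]
  rw [Finset.sum_congr rfl h1, ENNReal.ofReal_mul (by positivity)]
  congr 1
  · rw [ENNReal.ofReal_inv_of_pos (by exact_mod_cast Nat.pos_of_ne_zero hn),
      ENNReal.ofReal_natCast]
  · exact (ENNReal.ofReal_sum_of_nonneg
      (fun i _ => Set.indicator_nonneg (fun _ _ => zero_le_one) _)).symm

private lemma emp_isProb (x : ℕ → ℝ) (n : ℕ) :
    IsProbabilityMeasure
      ((((n + 1 : ℕ)) : ℝ≥0∞)⁻¹ • ∑ i ∈ range (n + 1), MeasureTheory.Measure.dirac (x i)) := by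
  constructor
  rw [Measure.smul_apply, Measure.finset_sum_apply, smul_eq_mul]
  simp only [measure_univ, Finset.sum_const, Finset.card_range, nsmul_eq_mul, mul_one]
  exact ENNReal.inv_mul_cancel (by simp) (by simp)

/-- For i.i.d. real random variables, the empirical distributions
`P̂ n ω := n⁻¹ ∑_{i < n} δ_{X i ω}` converge weakly, almost surely, to the law of `X 0`:
for `P`-a.e. `ω`, `∫ f dP̂ n ω → ∫ f d(law of X 0)` for every bounded continuous `f : ℝ →ᵇ ℝ`. -/
theorem empirical_measures_tendsto_law
    {Ω : Type*} [MeasurableSpace Ω] (P : Measure Ω) [IsProbabilityMeasure P]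
    (X : ℕ → Ω → ℝ) (hmeas : ∀ i, Measurable (X i))
    (hindep : iIndepFun X P)
    (hident : ∀ i, IdentDistrib (X i) (X 0) P P) :
    ∀ᵐ ω ∂P, ∀ f : ℝ →ᵇ ℝ,
      Tendsto
        (fun n : ℕ => ∫ y, f y ∂((n : ℝ≥0∞)⁻¹ •
          ∑ i ∈ range n, Measure.dirac (X i ω)))
        atTop (nhds (∫ x, f x ∂(P.map (X 0)))) := by
  classical
  set μ : Measure ℝ := P.map (X 0) with hμdef
  have hμprob : IsProbabilityMeasure μ := Measure.isProbabilityMeasure_map (hmeas 0).aemeasurable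
  -- `U S` : finite unions of rational open intervals, a countable family
  set U : Finset (ℚ × ℚ) → Set ℝ :=
    fun S => ⋃ p ∈ S, Set.Ioo (p.1 : ℝ) (p.2 : ℝ) with hUdef
  have hUmeas : ∀ S, MeasurableSet (U S) := fun S =>
    S.measurableSet_biUnion fun p _ => measurableSet_Ioo
  -- strong law of large numbers applied to the indicator of `U S`
  have hSLLN : ∀ S : Finset (ℚ × ℚ), ∀ᵐ ω ∂P,
      Tendsto (fun n : ℕ => (n : ℝ)⁻¹ • ∑ i ∈ range n, (U S).indicator (1 : ℝ → ℝ) (X i ω))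
        atTop (𝓝 (μ (U S)).toReal) := by
    intro S
    have hindmeas : Measurable ((U S).indicator (1 : ℝ → ℝ)) :=
      measurable_one.indicator (hUmeas S)
    have hint : Integrable (fun ω => (U S).indicator (1 : ℝ → ℝ) (X 0 ω)) P := by
      have heq : (fun ω => (U S).indicator (1 : ℝ → ℝ) (X 0 ω))
          = (X 0 ⁻¹' (U S)).indicator (fun _ => (1 : ℝ)) := by
        funext ω
        rw [← Set.indicator_comp_right (X 0)]
        rfl
      rw [heq]
      exact (integrable_const (1 : ℝ)).indicator ((hmeas 0) (hUmeas S))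
    have hlim : P[fun ω => (U S).indicator (1 : ℝ → ℝ) (X 0 ω)] = (μ (U S)).toReal := by
      rw [← measureReal_def, ← integral_indicator_one (hUmeas S), hμdef,
        integral_map (hmeas 0).aemeasurable hindmeas.aestronglyMeasurable]
    have := strong_law_ae (μ := P)
      (fun i ω => (U S).indicator (1 : ℝ → ℝ) (X i ω)) hint
      (fun i j hij => (hindep.indepFun hij).comp hindmeas hindmeas)
      (fun i => (hident i).comp hindmeas)
    rw [hlim] at this
    exact this
  have hae : ∀ᵐ ω ∂P, ∀ S : Finset (ℚ × ℚ),
      Tendsto (fun n : ℕ => (n : ℝ)⁻¹ • ∑ i ∈ range n, (U S).indicator (1 : ℝ → ℝ) (X i ω))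
        atTop (𝓝 (μ (U S)).toReal) := ae_all_iff.mpr hSLLN
  filter_upwards [hae] with ω hω
  -- the empirical measures (shifted by one, so they are probability measures)
  set emp : ℕ → Measure ℝ :=
    fun n => (n : ℝ≥0∞)⁻¹ • ∑ i ∈ range n, MeasureTheory.Measure.dirac (X i ω) with hempdef
  have hprob : ∀ n : ℕ, IsProbabilityMeasure (emp (n + 1)) := by
    intro n
    have := emp_isProb (fun i => X i ω) n
    simpa [hempdef] using this
  set ν : ℕ → ProbabilityMeasure ℝ := fun n => ⟨emp (n + 1), hprob n⟩ with hνdef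
  set μ' : ProbabilityMeasure ℝ := ⟨μ, hμprob⟩ with hμ'def
  -- convergence on each `U S`
  have key : ∀ S : Finset (ℚ × ℚ), Tendsto (fun n => ν n (U S)) atTop (𝓝 (μ' (U S))) := by
    intro S
    rw [← NNReal.tendsto_coe]
    have hreal : ∀ n : ℕ, ((ν n (U S) : ℝ≥0) : ℝ)
        = ((n + 1 : ℕ) : ℝ)⁻¹ • ∑ i ∈ range (n + 1), (U S).indicator (1 : ℝ → ℝ) (X i ω) := by
      intro n
      have : ((ν n (U S) : ℝ≥0) : ℝ) = (emp (n + 1) (U S)).toReal := rfl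
      rw [this, hempdef]
      rw [emp_apply (fun i => X i ω) (Nat.succ_ne_zero n) (hUmeas S)]
      rw [ENNReal.toReal_ofReal]
      · rfl
      · exact mul_nonneg (by positivity)
          (Finset.sum_nonneg fun i _ => Set.indicator_nonneg (fun _ _ => zero_le_one) _)
    have hμ'real : ((μ' (U S) : ℝ≥0) : ℝ) = (μ (U S)).toReal := rfl
    rw [hμ'real]
    have hshift := (hω S).comp (tendsto_add_atTop_nat 1)
    refine hshift.congr fun n => ?_
    exact (hreal n).symm
  -- portmanteau condition for open sets
  have h_opens : ∀ G : Set ℝ, IsOpen G → μ' G ≤ atTop.liminf (fun n => ν n G) := by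
    intro G hG
    set L := atTop.liminf (fun n => ν n G) with hLdef
    -- each `U S` contained in `G` has mass at most `L`
    have hle : ∀ S : Finset (ℚ × ℚ), U S ⊆ G → μ' (U S) ≤ L := by
      intro S hSG
      have h1 : μ' (U S) = atTop.liminf (fun n => ν n (U S)) := ((key S).liminf_eq).symm
      rw [h1, hLdef]
      refine liminf_le_liminf (.of_forall fun n => (ν n).apply_mono hSG) ?_ ?_
      · exact ⟨0, .of_forall fun n => zero_le⟩
      · exact (isBoundedUnder_of ⟨1, fun n => (ν n).apply_le_one G⟩).isCoboundedUnder_ge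
    -- `G` is a directed union of the `U S` it contains
    rw [← ENNReal.coe_le_coe, ProbabilityMeasure.ennreal_coeFn_eq_coeFn_toMeasure]
    have hcover : G = ⋃ S : {S : Finset (ℚ × ℚ) // U S ⊆ G}, U S.1 := by
      apply Set.Subset.antisymm
      · intro x hx
        obtain ⟨ε, hε, hball⟩ := Metric.isOpen_iff.mp hG x hx
        obtain ⟨q, hq1, hq2⟩ := exists_rat_btwn (show x - ε < x by linarith)
        obtain ⟨r, hr1, hr2⟩ := exists_rat_btwn (show x < x + ε by linarith)
        have hsub : Set.Ioo (q : ℝ) (r : ℝ) ⊆ G := by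
          intro y hy
          apply hball
          rw [Real.ball_eq_Ioo]
          exact ⟨lt_trans hq1 hy.1, lt_trans hy.2 hr2⟩
        have hUsub : U {(q, r)} ⊆ G := by
          simp only [hUdef, Finset.mem_singleton, Set.iUnion_iUnion_eq_left]
          simpa using hsub
        refine Set.mem_iUnion.mpr ⟨⟨{(q, r)}, hUsub⟩, ?_⟩
        simp only [hUdef, Finset.mem_singleton, Set.iUnion_iUnion_eq_left]
        simpa using Set.mem_Ioo.mpr ⟨hq2, hr1⟩
      · exact Set.iUnion_subset fun S => S.2
    have hdir : Directed (· ⊆ ·) (fun S : {S : Finset (ℚ × ℚ) // U S ⊆ G} => U S.1) := by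
      rintro ⟨S₁, hS₁⟩ ⟨S₂, hS₂⟩
      refine ⟨⟨S₁ ∪ S₂, ?_⟩, ?_, ?_⟩
      · simp only [hUdef]
        intro x hx
        simp only [Set.mem_iUnion, Finset.mem_union] at hx
        obtain ⟨p, hp | hp, hxp⟩ := hx
        · exact hS₁ (Set.mem_biUnion hp hxp)
        · exact hS₂ (Set.mem_biUnion hp hxp)
      · exact Set.biUnion_subset_biUnion_left fun p hp => Finset.mem_union_left _ hp
      · exact Set.biUnion_subset_biUnion_left fun p hp => Finset.mem_union_right _ hp
    calc (μ'.toMeasure) G = ⨆ S : {S : Finset (ℚ × ℚ) // U S ⊆ G}, μ'.toMeasure (U S.1) := by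
          conv_lhs => rw [hcover]
          exact hdir.measure_iUnion
      _ ≤ (L : ℝ≥0∞) := by
          refine iSup_le fun S => ?_
          rw [← ProbabilityMeasure.ennreal_coeFn_eq_coeFn_toMeasure]
          exact ENNReal.coe_le_coe.mpr (hle S.1 S.2)
  -- conclude weak convergence, then convergence of integrals
  have hconv : Tendsto ν atTop (𝓝 μ') := tendsto_of_forall_isOpen_le_liminf h_opens
  intro f
  have hf := ProbabilityMeasure.tendsto_iff_forall_integral_tendsto.mp hconv f
  have hshift : (fun n : ℕ => ∫ y, f y ∂(ν n : Measure ℝ))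
      = fun n : ℕ => ∫ y, f y ∂(emp (n + 1)) := rfl
  rw [hshift] at hf
  exact (tendsto_add_atTop_iff_nat 1).mp hf
end

section
/- Let X_1, X_2, … be i.i.d. real-valued random variables on a probability space (Ω, 𝓕, P) such that for P-almost every ω one has lim_{c→∞} sup_{n∈ℕ} n^{-1} ∑_{i=1}^{n} |X_i(ω)| · 1_{[c,∞)}(|X_i(ω)|) = 0, and for each n ∈ ℕ and ω ∈ Ω let P̂_n(·; ω) := n^{-1} ∑_{i=1}^{n} δ_{X_i(ω)} be the empirical distribution on ℝ. Then X_1 is integrable and, for P-almost every ω ∈ Ω, ∫_{ℝ} y dP̂_n(y; ω) → ∫_{ℝ} x dℙ(x) = E[X_1] as n → ∞, where ℙ is the law of X_1. -/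
open MeasureTheory ProbabilityTheory Filter Finset ENNReal

/-- tail-sum criterion for integrability -/
lemma integrable_of_tsum_tail {Ω : Type*} [MeasurableSpace Ω] (P : Measure Ω)
    [IsProbabilityMeasure P] {Y : Ω → ℝ} (hY : Measurable Y)
    (h : ∑' n : ℕ, P {ω | (n : ℝ) + 1 ≤ |Y ω|} ≠ ∞) : Integrable Y P := by
  refine ⟨hY.aestronglyMeasurable, ?_⟩
  rw [HasFiniteIntegral]
  have key : ∀ ω, (‖Y ω‖₊ : ℝ≥0∞) ≤ 1 + ∑' n : ℕ,
      Set.indicator {ω | (n : ℝ) + 1 ≤ |Y ω|} (fun _ => (1 : ℝ≥0∞)) ω := by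
    intro ω
    set t := |Y ω| with ht
    have t0 : 0 ≤ t := abs_nonneg _
    have h1 : (‖Y ω‖₊ : ℝ≥0∞) = ENNReal.ofReal t := by
      rw [← Real.nnnorm_abs, ← ht, ENNReal.ofReal, Real.toNNReal_eq_nnnorm_of_nonneg t0]
    have h2 : (⌊t⌋₊ : ℝ≥0∞) ≤ ∑' n : ℕ,
        Set.indicator {ω | (n : ℝ) + 1 ≤ |Y ω|} (fun _ => (1 : ℝ≥0∞)) ω := by
      have hone : ∀ n ∈ range ⌊t⌋₊,
          Set.indicator {ω | (n : ℝ) + 1 ≤ |Y ω|} (fun _ => (1 : ℝ≥0∞)) ω = 1 := by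
        intro n hn
        have h' : n + 1 ≤ ⌊t⌋₊ := Finset.mem_range.1 hn
        have h'' : ((n : ℝ) + 1) ≤ ⌊t⌋₊ := by exact_mod_cast h'
        exact Set.indicator_of_mem (Set.mem_setOf.2 (h''.trans (Nat.floor_le t0))) (fun _ => (1 : ℝ≥0∞))
      calc (⌊t⌋₊ : ℝ≥0∞) = ∑ n ∈ range ⌊t⌋₊, (1 : ℝ≥0∞) := by simp
        _ = ∑ n ∈ range ⌊t⌋₊,
            Set.indicator {ω | (n : ℝ) + 1 ≤ |Y ω|} (fun _ => (1 : ℝ≥0∞)) ω :=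
            Finset.sum_congr rfl (fun n hn => (hone n hn).symm)
        _ ≤ _ := ENNReal.sum_le_tsum _
    have h3 : ENNReal.ofReal t ≤ 1 + (⌊t⌋₊ : ℝ≥0∞) := by
      have : t ≤ 1 + (⌊t⌋₊ : ℝ) := by
        have := Nat.lt_floor_add_one t
        linarith
      calc ENNReal.ofReal t ≤ ENNReal.ofReal (1 + (⌊t⌋₊ : ℝ)) := ENNReal.ofReal_le_ofReal this
        _ = 1 + (⌊t⌋₊ : ℝ≥0∞) := by
            rw [ENNReal.ofReal_add zero_le_one (by positivity)]
            simp
    rw [h1]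
    exact h3.trans (add_le_add le_rfl h2)
  calc ∫⁻ ω, (‖Y ω‖₊ : ℝ≥0∞) ∂P
      ≤ ∫⁻ ω, (1 + ∑' n : ℕ,
        Set.indicator {ω | (n : ℝ) + 1 ≤ |Y ω|} (fun _ => (1 : ℝ≥0∞)) ω) ∂P :=
        lintegral_mono key
    _ = 1 + ∑' n : ℕ, P {ω | (n : ℝ) + 1 ≤ |Y ω|} := by
        have hms : ∀ n : ℕ, MeasurableSet {ω | (n : ℝ) + 1 ≤ |Y ω|} :=
          fun n => measurableSet_le measurable_const hY.abs
        rw [lintegral_add_left measurable_const, lintegral_const, measure_univ, mul_one,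
          lintegral_tsum (fun n => ((measurable_const.indicator (hms n)).aemeasurable))]
        congr 1
        refine tsum_congr fun n => ?_
        rw [lintegral_indicator (hms n), setLIntegral_const, one_mul]
    _ < ∞ := by
        rw [ENNReal.add_lt_top]
        exact ⟨one_lt_top, lt_top_iff_ne_top.2 h⟩

lemma integrable_id_dirac (a : ℝ) : Integrable (fun y : ℝ => y) (Measure.dirac a) := by
  refine ⟨stronglyMeasurable_id.aestronglyMeasurable, ?_⟩
  rw [HasFiniteIntegral]
  rw [lintegral_dirac' a (f := fun y : ℝ => ‖y‖ₑ)
    measurable_enorm]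
  exact enorm_lt_top

/-- If `X 0, X 1, …` are i.i.d. real random variables such that, almost surely,
`lim_{c → ∞} sup_{n} n⁻¹ ∑_{i < n} |X i| · 1_{[c,∞)}(|X i|) = 0`, then `X 0` is integrable
and, almost surely, the first moments of the empirical distributions
`n⁻¹ ∑_{i < n} δ_{X i ω}` converge to `∫ x d(law of X 0) = 𝔼[X 0]`. -/
theorem empirical_first_moments_tendsto
    {Ω : Type*} [MeasurableSpace Ω] (P : Measure Ω) [IsProbabilityMeasure P]
    (X : ℕ → Ω → ℝ) (hmeas : ∀ i, Measurable (X i))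
    (hindep : iIndepFun X P)
    (hident : ∀ i, IdentDistrib (X i) (X 0) P P)
    (hUI : ∀ᵐ ω ∂P, Tendsto
      (fun c : ℝ => ⨆ n : ℕ, ENNReal.ofReal
        ((n : ℝ)⁻¹ * ∑ i ∈ range n,
          |X i ω| * Set.indicator (Set.Ici c) 1 |X i ω|))
      atTop (nhds 0)) :
    Integrable (X 0) P ∧
      (∫ x, x ∂(P.map (X 0)) = ∫ ω, X 0 ω ∂P) ∧
      ∀ᵐ ω ∂P, Tendsto
        (fun n : ℕ => ∫ y, y ∂((n : ℝ≥0∞)⁻¹ •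
          ∑ i ∈ range n, Measure.dirac (X i ω)))
        atTop (nhds (∫ x, x ∂(P.map (X 0)))) := by
  -- Step A: integrability
  have hint : Integrable (X 0) P := by
    by_contra hni
    have hms : ∀ n : ℕ, MeasurableSet {x : ℝ | (n : ℝ) + 1 ≤ |x|} :=
      fun n => measurableSet_le measurable_const measurable_abs
    have htail : ∑' n : ℕ, P {ω | (n : ℝ) + 1 ≤ |X 0 ω|} = ∞ := by
      by_contra h; exact hni (integrable_of_tsum_tail P (hmeas 0) h)
    set s : ℕ → Set Ω := fun n => X n ⁻¹' {x | (n : ℝ) + 1 ≤ |x|} with hs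
    have hsm : ∀ n, MeasurableSet (s n) := fun n => (hmeas n) (hms n)
    have hmeq : ∀ n, P (s n) = P {ω | (n : ℝ) + 1 ≤ |X 0 ω|} := fun n =>
      (hident n).measure_mem_eq (hms n)
    have hsum : (∑' n, P (s n)) = ∞ := by simp_rw [hmeq]; exact htail
    have hindepset : iIndepSet s P := by
      rw [iIndepSet_iff_meas_biInter hsm]
      intro t
      exact hindep.measure_inter_preimage_eq_mul t (fun i _ => hms i)
    have hBC : P (limsup s atTop) = 1 := measure_limsup_eq_one hsm hindepset hsum
    have hmls : MeasurableSet (limsup s atTop) := MeasurableSet.measurableSet_limsup hsm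
    have hae : ∀ᵐ ω ∂P, ω ∈ limsup s atTop := by
      rw [ae_iff]
      have : {ω | ω ∉ limsup s atTop} = (limsup s atTop)ᶜ := rfl
      rw [this, measure_compl hmls (measure_ne_top _ _), hBC, measure_univ, tsub_self]
    have hne : (MeasureTheory.ae P).NeBot := ae_neBot.2 (IsProbabilityMeasure.ne_zero P)
    obtain ⟨ω, hωlim, hωUI⟩ := (hae.and hUI).exists
    obtain ⟨c, hc⟩ := ((tendsto_order.1 hωUI).2 1 zero_lt_one).exists
    obtain ⟨n, hn, hns⟩ := frequently_atTop.1 (mem_limsup_iff_frequently_mem.1 hωlim) ⌈c⌉₊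
    have hXn : (n : ℝ) + 1 ≤ |X n ω| := hns
    have hcn : c ≤ |X n ω| := by
      have h1 : c ≤ (⌈c⌉₊ : ℝ) := Nat.le_ceil c
      have h2 : (⌈c⌉₊ : ℝ) ≤ (n : ℝ) := by exact_mod_cast hn
      linarith
    -- the supremum at c is at least 1
    have hterm : (1 : ℝ) ≤ ((n + 1 : ℕ) : ℝ)⁻¹ * ∑ i ∈ range (n + 1),
        |X i ω| * Set.indicator (Set.Ici c) 1 |X i ω| := by
      have hnonneg : ∀ i ∈ range (n + 1),
          (0 : ℝ) ≤ |X i ω| * Set.indicator (Set.Ici c) 1 |X i ω| := by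
        intro i _
        apply mul_nonneg (abs_nonneg _)
        exact Set.indicator_nonneg (fun _ _ => zero_le_one) _
      have hsingle : |X n ω| * Set.indicator (Set.Ici c) 1 |X n ω| ≤
          ∑ i ∈ range (n + 1), |X i ω| * Set.indicator (Set.Ici c) 1 |X i ω| :=
        Finset.single_le_sum hnonneg (Finset.self_mem_range_succ n)
      have hind : Set.indicator (Set.Ici c) (1 : ℝ → ℝ) |X n ω| = 1 :=
        Set.indicator_of_mem (Set.mem_Ici.2 hcn) (1 : ℝ → ℝ)
      have hn1 : ((n : ℝ) + 1) ≤ |X n ω| * Set.indicator (Set.Ici c) 1 |X n ω| := by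
        simp only [hind, mul_one]; exact hXn
      have hpos : (0 : ℝ) < (n : ℝ) + 1 := by positivity
      have hsum' : ((n : ℝ) + 1) ≤ ∑ i ∈ range (n + 1),
          |X i ω| * Set.indicator (Set.Ici c) 1 |X i ω| := hn1.trans hsingle
      have hcast : ((n + 1 : ℕ) : ℝ) = (n : ℝ) + 1 := by push_cast; ring
      rw [hcast]
      calc (1 : ℝ) = ((n : ℝ) + 1)⁻¹ * ((n : ℝ) + 1) := (inv_mul_cancel₀ hpos.ne').symm
        _ ≤ ((n : ℝ) + 1)⁻¹ * ∑ i ∈ range (n + 1),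
            |X i ω| * Set.indicator (Set.Ici c) 1 |X i ω| :=
          mul_le_mul_of_nonneg_left hsum' (inv_nonneg.2 hpos.le)
    have hge : (1 : ℝ≥0∞) ≤ ⨆ m : ℕ, ENNReal.ofReal
        ((m : ℝ)⁻¹ * ∑ i ∈ range m, |X i ω| * Set.indicator (Set.Ici c) 1 |X i ω|) := by
      refine le_trans ?_ (le_iSup _ (n + 1))
      rw [← ENNReal.ofReal_one]
      exact ENNReal.ofReal_le_ofReal hterm
    exact absurd (hge.trans_lt hc) (lt_irrefl _)
  -- Step B: the change of variables
  have heq : ∫ x, x ∂(P.map (X 0)) = ∫ ω, X 0 ω ∂P :=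
    integral_map (hmeas 0).aemeasurable aestronglyMeasurable_id
  refine ⟨hint, heq, ?_⟩
  -- Step C: SLLN
  have hslln := strong_law_ae_real X hint
    (fun i j hij => hindep.indepFun hij) hident
  rw [heq]
  filter_upwards [hslln] with ω hω
  have hrw : ∀ n : ℕ, (∫ y, y ∂((n : ℝ≥0∞)⁻¹ •
      ∑ i ∈ range n, Measure.dirac (X i ω))) = (∑ i ∈ range n, X i ω) / n := by
    intro n
    rw [integral_smul_measure,
      integral_finset_sum_measure (fun i _ => integrable_id_dirac (X i ω))]
    simp only [integral_dirac]
    rw [ENNReal.toReal_inv, ENNReal.toReal_natCast, smul_eq_mul, ← div_eq_inv_mul]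
  simpa only [hrw] using hω
end
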